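/- Fix a real number s ∈ [0, π/2] and let ν² := cos s + sin s. Let U be an N×N complex matrix with U² = I. Define the 2N×2N block matrices R̃ := (1/ν)·[[√(cos s)·I, √(sin s)·I], [√(sin s)·I, −√(cos s)·I]], P̃ := [[I, 0], [0, −i·I]], and cU := [[I, 0], [0, U]] (the controlled-U operation). Then the top-left N×N block of the product R̃ · cU · P̃ · R̃ equals (1/(cos s + sin s)) · (cos(s)·I − i·sin(s)·U), i.e. (1/(cos s + sin s)) · exp(−i·s·U). -/

import Mathlib

open NormedSpace

/-- The ring homomorphism `(a, b) ↦ ((a+b)/2)•1 + ((a-b)/2)•U` for a self-inverse `U`. -/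
noncomputable def involHom {N : Type*} [Fintype N] [DecidableEq N]
    (U : Matrix N N ℂ) (hU : U * U = 1) : ℂ × ℂ →+* Matrix N N ℂ where
  toFun p := ((p.1 + p.2) / 2) • (1 : Matrix N N ℂ) + ((p.1 - p.2) / 2) • U
  map_one' := by norm_num
  map_mul' p q := by
    simp only [Prod.fst_mul, Prod.snd_mul, add_mul, mul_add, smul_add, smul_smul,
      Matrix.smul_mul, Matrix.mul_smul, Matrix.mul_one, Matrix.one_mul, hU]
    module
  map_zero' := by norm_num
  map_add' p q := by
    simp only [Prod.fst_add, Prod.snd_add]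
    module

lemma exp_smul_invol {N : Type*} [Fintype N] [DecidableEq N]
    (U : Matrix N N ℂ) (hU : U * U = 1) (z : ℂ) :
    exp (z • U) =
      ((Complex.exp z + Complex.exp (-z)) / 2) • (1 : Matrix N N ℂ) +
      ((Complex.exp z - Complex.exp (-z)) / 2) • U := by
  letI : SeminormedRing (Matrix N N ℂ) := Matrix.linftyOpSemiNormedRing
  letI : NormedRing (Matrix N N ℂ) := Matrix.linftyOpNormedRing
  letI : NormedAlgebra ℂ (Matrix N N ℂ) := Matrix.linftyOpNormedAlgebra
  have h1 : z • U = involHom U hU (z, -z) := by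
    simp [involHom]
  have hc : Continuous (involHom U hU) := by
    simp only [involHom, RingHom.coe_mk, MonoidHom.coe_mk, OneHom.coe_mk]
    fun_prop
  rw [h1]
  erw [← map_exp (involHom U hU) hc]
  have : exp ((z, -z) : ℂ × ℂ) = (Complex.exp z, Complex.exp (-z)) := by
    ext
    · rw [Prod.fst_exp]; exact (Complex.exp_eq_exp_ℂ ▸ rfl)
    · rw [Prod.snd_exp]; exact (Complex.exp_eq_exp_ℂ ▸ rfl)
  rw [this]
  simp [involHom]

/-- Correctness of the single-ancilla gadget: for `s ∈ [0, π/2]`, `ν² = cos s + sin s`,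
and an `N×N` self-inverse complex matrix `U` (`U² = I`), with the block matrices
`R̃ = (1/ν)·[[√(cos s)·I, √(sin s)·I], [√(sin s)·I, −√(cos s)·I]]`,
`P̃ = [[I, 0], [0, −i·I]]` and `cU = [[I, 0], [0, U]]`, the top-left `N×N` block of
`R̃ · cU · P̃ · R̃` equals `(1/(cos s + sin s))·(cos(s)·I − i·sin(s)·U)`, i.e.
`(1/(cos s + sin s))·exp(−i·s·U)`. -/
theorem stmt_8 {N : Type*} [Fintype N] [DecidableEq N] (s : ℝ)
    (hs0 : 0 ≤ s) (hs1 : s ≤ Real.pi / 2)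
    (U : Matrix N N ℂ) (hU : U * U = 1)
    (Rt Pt cU : Matrix (N ⊕ N) (N ⊕ N) ℂ)
    (hRt : Rt = ((Real.sqrt (Real.cos s + Real.sin s) : ℂ))⁻¹ •
      Matrix.fromBlocks
        ((Real.sqrt (Real.cos s) : ℂ) • (1 : Matrix N N ℂ))
        ((Real.sqrt (Real.sin s) : ℂ) • (1 : Matrix N N ℂ))
        ((Real.sqrt (Real.sin s) : ℂ) • (1 : Matrix N N ℂ))
        (-((Real.sqrt (Real.cos s) : ℂ) • (1 : Matrix N N ℂ))))
    (hPt : Pt = Matrix.fromBlocks (1 : Matrix N N ℂ) 0 0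
      ((-Complex.I) • (1 : Matrix N N ℂ)))
    (hcU : cU = Matrix.fromBlocks (1 : Matrix N N ℂ) 0 0 U) :
    (Rt * cU * Pt * Rt).toBlocks₁₁ =
      (((Real.cos s + Real.sin s : ℝ) : ℂ))⁻¹ •
        ((Real.cos s : ℂ) • (1 : Matrix N N ℂ) - (Complex.I * (Real.sin s : ℂ)) • U) ∧
    (Rt * cU * Pt * Rt).toBlocks₁₁ =
      (((Real.cos s + Real.sin s : ℝ) : ℂ))⁻¹ •
        NormedSpace.exp ((-(Complex.I * (s : ℂ))) • U) := by
  have hcos : 0 ≤ Real.cos s := Real.cos_nonneg_of_mem_Icc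
    ⟨by linarith [Real.pi_pos], hs1⟩
  have hsin : 0 ≤ Real.sin s := Real.sin_nonneg_of_nonneg_of_le_pi hs0
    (by linarith [Real.pi_pos])
  have hc : ((Real.sqrt (Real.cos s) : ℂ)) * (Real.sqrt (Real.cos s) : ℂ)
      = (Real.cos s : ℂ) := by
    rw [← Complex.ofReal_mul, Real.mul_self_sqrt hcos]
  have hd : ((Real.sqrt (Real.sin s) : ℂ)) * (Real.sqrt (Real.sin s) : ℂ)
      = (Real.sin s : ℂ) := by
    rw [← Complex.ofReal_mul, Real.mul_self_sqrt hsin]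
  have hn : (((Real.sqrt (Real.cos s + Real.sin s) : ℂ))⁻¹) *
      (((Real.sqrt (Real.cos s + Real.sin s) : ℂ))⁻¹)
      = (((Real.cos s + Real.sin s : ℝ) : ℂ))⁻¹ := by
    rw [← mul_inv, ← Complex.ofReal_mul, Real.mul_self_sqrt (by linarith),
      Complex.ofReal_add]
  have h1 : (Rt * cU * Pt * Rt).toBlocks₁₁ =
      (((Real.cos s + Real.sin s : ℝ) : ℂ))⁻¹ •
        ((Real.cos s : ℂ) • (1 : Matrix N N ℂ) - (Complex.I * (Real.sin s : ℂ)) • U) := by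
    subst hRt hPt hcU
    simp only [Matrix.smul_mul, Matrix.mul_smul, Matrix.fromBlocks_multiply, smul_smul,
      Matrix.mul_one, Matrix.one_mul, Matrix.mul_zero, Matrix.zero_mul,
      add_zero, zero_add, Matrix.fromBlocks_smul, Matrix.toBlocks_fromBlocks₁₁,
      Matrix.smul_mul, Matrix.mul_smul, Matrix.mul_one]
    push_cast at hc hd hn
    match_scalars
    · rw [← hn, ← hc]; ring
    · rw [← hn, ← hd]; ring
  refine ⟨h1, h1.trans ?_⟩
  rw [exp_smul_invol U hU]
  have hz1 : Complex.exp (-(Complex.I * (s : ℂ)))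
      = Complex.cos s - Complex.sin s * Complex.I := by
    rw [show -(Complex.I * (s : ℂ)) = (-(s : ℂ)) * Complex.I by ring, Complex.exp_mul_I,
      Complex.cos_neg, Complex.sin_neg]
    ring
  have hz2 : Complex.exp (-(-(Complex.I * (s : ℂ))))
      = Complex.cos s + Complex.sin s * Complex.I := by
    rw [show -(-(Complex.I * (s : ℂ))) = ((s : ℂ)) * Complex.I by ring, Complex.exp_mul_I]
  rw [hz1, hz2]
  push_cast
  module
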